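/- Let P, P₀ ∈ ℝ^{n×n} be symmetric positive definite, c, c₀ ∈ ℝⁿ, and let L₀ ∈ ℝ^{n×n} be invertible with P₀ = L₀ L₀ᵀ. Set c̃ := L₀ᵀ (c − c₀), P̃ := L₀⁻¹ P L₀⁻ᵀ, and let ℓ* := sup { ℓ_{c̃,P̃}(β) : β ∈ I_{P̃} }, and γ := −ℓ* (so γ > 0). Then E(c,P) ⊆ E(c₀, γ⁻¹ P₀) and ∂E(c,P) ∩ ∂E(c₀, γ⁻¹ P₀) ≠ ∅; moreover, with d := γ^{−1/2}(c − c₀) + c₀, one has E(d, γ P) ⊆ E(c₀, P₀) and ∂E(d, γ P) ∩ ∂E(c₀, P₀) ≠ ∅. -/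

import Mathlib

open Matrix

noncomputable section

/-- The ellipsoid with center `c` and shape matrix `P`. -/
def Ellipsoid {n : ℕ} (c : Fin n → ℝ) (P : Matrix (Fin n) (Fin n) ℝ) : Set (Fin n → ℝ) :=
  {x | (x - c) ⬝ᵥ P.mulVec (x - c) ≤ 1}

/-- The closed Euclidean unit ball `B(0,1) = {x | xᵀx ≤ 1}`. -/
def UnitBall (n : ℕ) : Set (Fin n → ℝ) :=
  {x | x ⬝ᵥ x ≤ 1}

open Classical in
/-- The dual function `ℓ_{c,P}(β) = −β − Σ_{i : c̄ᵢ ≠ 0} c̄ᵢ² λᵢβ/(λᵢβ−1)`,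
expressed via the eigenvalues `λ` of `P` and the coordinates `c̄ = Vᵀc` of the center
in an orthonormal eigenbasis of `P`. -/
def ellFun {n : ℕ} (lam cbar : Fin n → ℝ) (β : ℝ) : ℝ :=
  -β - ∑ i ∈ Finset.univ.filter (fun i => cbar i ≠ 0),
    (cbar i) ^ 2 * (lam i * β / (lam i * β - 1))

open Classical in
/-- The domain `I_P` of the dual function: `(1/λ_min, ∞)` if some `i` in the support
of `c̄` achieves `λ_min`, and `[1/λ_min, ∞)` otherwise. -/
def ellDom {n : ℕ} (lam cbar : Fin n → ℝ) (lammin : ℝ) : Set ℝ :=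
  if ∃ i, cbar i ≠ 0 ∧ lam i = lammin then Set.Ioi (1 / lammin) else Set.Ici (1 / lammin)

lemma frontier_ellipsoid {n : ℕ} (c : Fin n → ℝ) (M : Matrix (Fin n) (Fin n) ℝ) :
    frontier (Ellipsoid c M) = {x | (x - c) ⬝ᵥ M.mulVec (x - c) = 1} := by
  have hcont : Continuous fun x : Fin n → ℝ => (x - c) ⬝ᵥ M.mulVec (x - c) := by
    simp only [dotProduct, Matrix.mulVec]
    refine continuous_finset_sum _ fun i _ => Continuous.mul ?_
      (continuous_finset_sum _ fun j _ => Continuous.mul continuous_const ?_)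
    · exact (continuous_apply i).sub continuous_const
    · exact (continuous_apply j).sub continuous_const
  have hclosed : IsClosed (Ellipsoid c M) := isClosed_le hcont continuous_const
  have hscale : ∀ (x : Fin n → ℝ) (t : ℝ),
      ((c + t • (x - c)) - c) ⬝ᵥ M.mulVec ((c + t • (x - c)) - c)
        = t^2 * ((x - c) ⬝ᵥ M.mulVec (x - c)) := by
    intro x t
    rw [add_sub_cancel_left, Matrix.mulVec_smul, smul_dotProduct, dotProduct_smul,
      smul_eq_mul, smul_eq_mul]
    ring
  ext x
  constructor
  · intro hx
    have h1 : x ∈ Ellipsoid c M := hclosed.frontier_subset hx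
    have h2 : x ∉ interior (Ellipsoid c M) := fun h => hx.2 h
    have h3 : ¬ ((x - c) ⬝ᵥ M.mulVec (x - c) < 1) := by
      intro hlt
      exact h2 (interior_maximal (fun y hy => le_of_lt hy)
        (isOpen_lt hcont continuous_const) hlt)
    exact le_antisymm h1 (not_lt.mp h3)
  · intro hx
    rw [frontier_eq_closure_inter_closure]
    constructor
    · exact subset_closure (le_of_eq hx)
    · have hg : Continuous fun t : ℝ => c + t • (x - c) := by
        exact continuous_const.add (continuous_id.smul continuous_const)
      have htend : Filter.Tendsto (fun t : ℝ => c + t • (x - c)) (nhdsWithin 1 (Set.Ioi 1))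
          (nhds x) := by
        have h := (hg.tendsto 1).mono_left (nhdsWithin_le_nhds (s := Set.Ioi 1))
        simpa using h
      refine mem_closure_of_tendsto htend ?_
      filter_upwards [self_mem_nhdsWithin] with t ht
      simp only [Set.mem_compl_iff, Ellipsoid, Set.mem_setOf_eq, not_le]
      rw [hscale]
      have ht1 : (1:ℝ) < t := ht
      have hx' : (x - c) ⬝ᵥ M.mulVec (x - c) = 1 := hx
      nlinarith [hx', mul_self_lt_mul_self (by linarith : (0:ℝ) ≤ 1) ht1]

lemma ellFun_eq {n : ℕ} (lam cbar : Fin n → ℝ) (β : ℝ) :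
    ellFun lam cbar β = -β - ∑ i, (if cbar i ≠ 0 then
      (cbar i) ^ 2 * (lam i * β / (lam i * β - 1)) else 0) := by
  classical
  unfold ellFun
  rw [Finset.sum_filter]

lemma core {n : ℕ} (lam cbar : Fin n → ℝ) (lammin : ℝ)
    (hmin : ∀ i, lammin ≤ lam i) (hex : ∃ i, lam i = lammin) (hpos : 0 < lammin)
    (γ : ℝ) (hγ : γ = -sSup (ellFun lam cbar '' ellDom lam cbar lammin)) :
    (∀ z : Fin n → ℝ, (∑ i, lam i * (z i - cbar i)^2) ≤ 1 → (∑ i, (z i)^2) ≤ γ)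
    ∧ (∃ z : Fin n → ℝ, (∑ i, lam i * (z i - cbar i)^2) = 1 ∧ (∑ i, (z i)^2) = γ)
    ∧ 0 < γ := by
  classical
  have hβ0pos : 0 < 1 / lammin := by positivity
  have hlpos : ∀ i, 0 < lam i := fun i => lt_of_lt_of_le hpos (hmin i)
  -- facts about the domain
  have hdomne : (ellDom lam cbar lammin).Nonempty := by
    unfold ellDom; split_ifs
    · exact ⟨1/lammin + 1, by simp [Set.mem_Ioi]⟩
    · exact ⟨1/lammin + 1, by simp [Set.mem_Ici]⟩
  have hdom1 : ∀ β ∈ ellDom lam cbar lammin, 1/lammin ≤ β := by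
    intro β hβ; unfold ellDom at hβ; split_ifs at hβ
    · exact le_of_lt hβ
    · exact hβ
  have hdom0 : ∀ β ∈ ellDom lam cbar lammin, ∀ i, 1 ≤ lam i * β := by
    intro β hβ i
    have h1 := hdom1 β hβ
    have : lammin * (1/lammin) ≤ lam i * β :=
      mul_le_mul (hmin i) h1 (le_of_lt hβ0pos) (le_of_lt (hlpos i))
    rwa [mul_one_div, div_self (ne_of_gt hpos)] at this
  have hdom2 : ∀ β ∈ ellDom lam cbar lammin, ∀ i, cbar i ≠ 0 → 1 < lam i * β := by
    intro β hβ i hi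
    rcases eq_or_lt_of_le (hmin i) with h | h
    · have hmem : ∃ j, cbar j ≠ 0 ∧ lam j = lammin := ⟨i, hi, h.symm⟩
      unfold ellDom at hβ; rw [if_pos hmem] at hβ
      have : lammin * (1/lammin) < lam i * β := by
        rw [← h]
        exact mul_lt_mul_of_pos_left hβ (by rw [h] at hpos ⊢; exact hpos)
      rwa [mul_one_div, div_self (ne_of_gt hpos)] at this
    · have h1 := hdom1 β hβ
      have : lammin * (1/lammin) < lam i * β := by
        calc lammin * (1/lammin) < lam i * (1/lammin) := by
              exact mul_lt_mul_of_pos_right h hβ0pos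
          _ ≤ lam i * β := mul_le_mul_of_nonneg_left h1 (le_of_lt (hlpos i))
      rwa [mul_one_div, div_self (ne_of_gt hpos)] at this
  -- weak duality
  have wd : ∀ z : Fin n → ℝ, (∑ i, lam i * (z i - cbar i)^2) ≤ 1 →
      ∀ β ∈ ellDom lam cbar lammin, (∑ i, (z i)^2) ≤ -(ellFun lam cbar β) := by
    intro z hz β hβ
    have hβpos : 0 < β := lt_of_lt_of_le hβ0pos (hdom1 β hβ)
    have key : ∀ i, (z i)^2 ≤ β * (lam i * (z i - cbar i)^2) +
        (if cbar i ≠ 0 then (cbar i)^2 * (lam i * β / (lam i * β - 1)) else 0) := by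
      intro i
      by_cases hc : cbar i ≠ 0
      · rw [if_pos hc]
        have h1 : 1 < lam i * β := hdom2 β hβ i hc
        have h2 : 0 < lam i * β - 1 := by linarith
        have hgoal : (z i)^2 - β * (lam i * (z i - cbar i)^2) ≤
            (cbar i)^2 * (lam i * β) / (lam i * β - 1) := by
          rw [le_div_iff₀ h2]
          nlinarith [sq_nonneg ((lam i * β - 1) * z i - (lam i * β) * cbar i)]
        rw [mul_div_assoc] at hgoal
        linarith
      · rw [if_neg hc]
        push_neg at hc
        have h1 : 1 ≤ lam i * β := hdom0 β hβ i
        rw [hc]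
        nlinarith [sq_nonneg (z i)]
    calc (∑ i, (z i)^2)
        ≤ ∑ i, (β * (lam i * (z i - cbar i)^2) +
            (if cbar i ≠ 0 then (cbar i)^2 * (lam i * β / (lam i * β - 1)) else 0)) :=
          Finset.sum_le_sum (fun i _ => key i)
      _ = β * (∑ i, lam i * (z i - cbar i)^2) +
            ∑ i, (if cbar i ≠ 0 then (cbar i)^2 * (lam i * β / (lam i * β - 1)) else 0) := by
          rw [Finset.sum_add_distrib, Finset.mul_sum]
      _ ≤ β * 1 + ∑ i, (if cbar i ≠ 0 then (cbar i)^2 * (lam i * β / (lam i * β - 1)) else 0) := by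
          have := mul_le_mul_of_nonneg_left hz (le_of_lt hβpos)
          linarith
      _ = -(ellFun lam cbar β) := by rw [ellFun_eq]; ring
  -- consequences for γ
  have hbdd : BddAbove (ellFun lam cbar '' ellDom lam cbar lammin) := by
    refine ⟨-(∑ i, (cbar i)^2), ?_⟩
    rintro y ⟨β, hβ, rfl⟩
    have := wd cbar (by simp) β hβ
    linarith [this]
  have wdγ : ∀ z : Fin n → ℝ, (∑ i, lam i * (z i - cbar i)^2) ≤ 1 → (∑ i, (z i)^2) ≤ γ := by
    intro z hz
    have : sSup (ellFun lam cbar '' ellDom lam cbar lammin) ≤ -(∑ i, (z i)^2) := by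
      apply csSup_le (hdomne.image _)
      rintro y ⟨β, hβ, rfl⟩
      linarith [wd z hz β hβ]
    rw [hγ]; linarith
  refine ⟨wdγ, ?_, ?_⟩
  · -- existence of a touching point
    set ψ : ℝ → ℝ := fun β => ∑ i, (if cbar i ≠ 0 then
      lam i * (cbar i)^2 / (lam i * β - 1)^2 else 0) with hψdef
    have hψnn : ∀ β, 0 ≤ ψ β := by
      intro β; rw [hψdef]
      apply Finset.sum_nonneg
      intro i _
      by_cases hc : cbar i ≠ 0
      · rw [if_pos hc]
        exact div_nonneg (mul_nonneg (hlpos i).le (sq_nonneg _)) (sq_nonneg _)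
      · rw [if_neg hc]
    set M : ℝ := ∑ i, (if cbar i ≠ 0 then lam i * (cbar i)^2 else 0) with hMdef
    have hM0 : 0 ≤ M := by
      rw [hMdef]; apply Finset.sum_nonneg; intro i _
      by_cases hc : cbar i ≠ 0
      · rw [if_pos hc]; exact mul_nonneg (hlpos i).le (sq_nonneg _)
      · rw [if_neg hc]
    set b : ℝ := (M + 2) / lammin with hbdef
    have hbpos : 0 < b := by rw [hbdef]; positivity
    have hblam : lammin * b = M + 2 := by
      rw [hbdef, mul_div_assoc', mul_comm, mul_div_assoc, div_self (ne_of_gt hpos), mul_one]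
    have hψb : ψ b < 1 := by
      have hbound : ψ b ≤ M / (M + 1) := by
        rw [hψdef, hMdef]
        simp only
        rw [Finset.sum_div]
        apply Finset.sum_le_sum
        intro i _
        by_cases hc : cbar i ≠ 0
        · rw [if_pos hc, if_pos hc]
          have h1 : M + 1 ≤ lam i * b - 1 := by
            have : lammin * b ≤ lam i * b := mul_le_mul_of_nonneg_right (hmin i) hbpos.le
            linarith [hblam]
          have h2 : (M + 1) ≤ (lam i * b - 1)^2 := by nlinarith [hM0]
          have h3 : (0:ℝ) < M + 1 := by linarith
          exact div_le_div_of_nonneg_left (mul_nonneg (hlpos i).le (sq_nonneg _)) h3 h2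
        · rw [if_neg hc, if_neg hc, zero_div]
      have : M / (M + 1) < 1 := by
        rw [div_lt_one (by linarith)]; linarith
      linarith
    have hcontψ : ∀ a : ℝ, 0 < a → (∀ i, cbar i ≠ 0 → 1 < lam i * a) →
        ContinuousOn ψ (Set.Icc a b) := by
      intro a ha haS
      rw [hψdef]
      apply continuousOn_finset_sum
      intro i _
      by_cases hc : cbar i ≠ 0
      · simp only [if_pos hc]
        apply ContinuousOn.div continuousOn_const
        · exact (((continuous_const.mul continuous_id).sub continuous_const).pow 2).continuousOn
        · intro β hβ
          have h1 : 1 < lam i * β :=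
            lt_of_lt_of_le (haS i hc) (mul_le_mul_of_nonneg_left hβ.1 (hlpos i).le)
          exact pow_ne_zero 2 (by intro h; rw [sub_eq_zero] at h; rw [h] at h1; exact lt_irrefl _ h1)
      · simp only [if_neg hc]
        exact continuousOn_const
    obtain ⟨βs, t, i₀, hβdom, hi₀, hti₀, hcon, hβt⟩ :
        ∃ (β t : ℝ) (i₀ : Fin n),
          β ∈ ellDom lam cbar lammin ∧ lam i₀ = lammin ∧ (t = 0 ∨ cbar i₀ = 0) ∧
          ψ β + lammin * t^2 = 1 ∧ β * (lammin * t^2) = t^2 := by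
      by_cases hS : ∃ i, cbar i ≠ 0 ∧ lam i = lammin
      · obtain ⟨i₁, hc₁, hl₁⟩ := hS
        have habs : 0 < |cbar i₁| := abs_pos.mpr hc₁
        set δ : ℝ := min (1/lammin) (|cbar i₁| / Real.sqrt lammin) with hδdef
        have hδpos : 0 < δ :=
          lt_min hβ0pos (div_pos habs (Real.sqrt_pos.mpr hpos))
        set a : ℝ := 1/lammin + δ with hadef
        have haβ0 : 1/lammin < a := by rw [hadef]; linarith
        have hapos : 0 < a := lt_trans hβ0pos haβ0
        have haS : ∀ i, cbar i ≠ 0 → 1 < lam i * a := by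
          intro i _
          have h1 : lammin * (1/lammin) < lammin * a := mul_lt_mul_of_pos_left haβ0 hpos
          have h2 : lammin * a ≤ lam i * a := mul_le_mul_of_nonneg_right (hmin i) hapos.le
          rw [mul_one_div, div_self (ne_of_gt hpos)] at h1
          linarith
        have hab : a ≤ b := by
          have h1 : δ ≤ 1/lammin := min_le_left _ _
          have h2 : (1:ℝ)/lammin + 1/lammin ≤ b := by
            rw [hbdef, ← add_div, div_le_div_iff_of_pos_right hpos]
            linarith
          rw [hadef]; linarith
        have hψa : 1 ≤ ψ a := by
          have hterm : 1 ≤ lam i₁ * (cbar i₁)^2 / (lam i₁ * a - 1)^2 := by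
            have hden1 : lam i₁ * a - 1 = lammin * δ := by
              rw [hl₁, hadef, mul_add, mul_one_div, div_self (ne_of_gt hpos)]; ring
            have h3 : δ ≤ |cbar i₁| / Real.sqrt lammin := min_le_right _ _
            have h4 : δ^2 ≤ (cbar i₁)^2 / lammin := by
              have h5 : δ * δ ≤ (|cbar i₁| / Real.sqrt lammin) * (|cbar i₁| / Real.sqrt lammin) :=
                mul_self_le_mul_self hδpos.le h3
              have h6 : (|cbar i₁| / Real.sqrt lammin) * (|cbar i₁| / Real.sqrt lammin)
                  = (cbar i₁)^2 / lammin := by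
                rw [div_mul_div_comm, ← sq, ← sq, sq_abs, Real.sq_sqrt hpos.le]
              nlinarith
            rw [le_div_iff₀ hpos] at h4
            have h7 : lammin * δ^2 ≤ (cbar i₁)^2 := by linarith
            rw [hden1, hl₁, le_div_iff₀ (by positivity)]
            nlinarith [mul_le_mul_of_nonneg_left h7 hpos.le]
          have h8 := Finset.single_le_sum
            (f := fun i => if cbar i ≠ 0 then lam i * (cbar i)^2 / (lam i * a - 1)^2 else 0)
            (fun i _ => by
              by_cases hc : cbar i ≠ 0
              · rw [if_pos hc]
                exact div_nonneg (mul_nonneg (hlpos i).le (sq_nonneg _)) (sq_nonneg _)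
              · rw [if_neg hc])
            (Finset.mem_univ i₁)
          simp only [if_pos hc₁] at h8
          rw [hψdef]
          exact le_trans hterm h8
        obtain ⟨βs, hβsmem, hψβs⟩ :=
          intermediate_value_Icc' hab (hcontψ a hapos haS) ⟨hψb.le, hψa⟩
        refine ⟨βs, 0, i₁, ?_, hl₁, Or.inl rfl, ?_, by ring⟩
        · unfold ellDom
          rw [if_pos ⟨i₁, hc₁, hl₁⟩]
          exact lt_of_lt_of_le haβ0 hβsmem.1
        · rw [hψβs]; ring
      · have hβ₀S : ∀ i, cbar i ≠ 0 → 1 < lam i * (1/lammin) := by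
          intro i hc
          have hgt : lammin < lam i :=
            lt_of_le_of_ne (hmin i) (fun h => hS ⟨i, hc, h.symm⟩)
          have h1 : lammin * (1/lammin) < lam i * (1/lammin) :=
            mul_lt_mul_of_pos_right hgt hβ0pos
          rwa [mul_one_div, div_self (ne_of_gt hpos)] at h1
        have hdomIci : ellDom lam cbar lammin = Set.Ici (1/lammin) := by
          unfold ellDom; rw [if_neg hS]
        obtain ⟨i₀, hi₀⟩ := hex
        by_cases hψ0 : 1 ≤ ψ (1/lammin)
        · have hab : 1/lammin ≤ b := by
            rw [hbdef]
            gcongr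
            linarith
          obtain ⟨βs, hβsmem, hψβs⟩ :=
            intermediate_value_Icc' hab (hcontψ (1/lammin) hβ0pos hβ₀S) ⟨hψb.le, hψ0⟩
          refine ⟨βs, 0, i₀, ?_, hi₀, Or.inl rfl, ?_, by ring⟩
          · rw [hdomIci]; exact hβsmem.1
          · rw [hψβs]; ring
        · push_neg at hψ0
          have hc₀ : cbar i₀ = 0 := by
            by_contra h
            exact hS ⟨i₀, h, hi₀⟩
          set t : ℝ := Real.sqrt ((1 - ψ (1/lammin))/lammin) with htdef
          have ht2 : t^2 = (1 - ψ (1/lammin))/lammin := by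
            rw [htdef]
            exact Real.sq_sqrt (div_nonneg (by linarith) hpos.le)
          refine ⟨1/lammin, t, i₀, ?_, hi₀, Or.inr hc₀, ?_, ?_⟩
          · rw [hdomIci]; exact Set.self_mem_Ici
          · rw [ht2, mul_div_assoc', mul_comm, mul_div_assoc, div_self (ne_of_gt hpos)]; ring
          · rw [ht2]; field_simp
    -- verification
    have hβS : ∀ i, cbar i ≠ 0 → 1 < lam i * βs := hdom2 βs hβdom
    have hden : ∀ i, cbar i ≠ 0 → lam i * βs - 1 ≠ 0 :=
      fun i hc => ne_of_gt (by linarith [hβS i hc])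
    set z : Fin n → ℝ := fun i => if cbar i ≠ 0 then lam i * βs * cbar i / (lam i * βs - 1)
      else if i = i₀ then t else 0 with hzdef
    have hsum1 : (∑ i, lam i * (z i - cbar i)^2) = ψ βs + lammin * t^2 := by
      have hptw : ∀ i, lam i * (z i - cbar i)^2 =
          (if cbar i ≠ 0 then lam i * (cbar i)^2 / (lam i * βs - 1)^2 else 0) +
          (if i = i₀ then lammin * t^2 else 0) := by
        intro i
        by_cases hc : cbar i ≠ 0
        · have hd := hden i hc
          have h0 : (if i = i₀ then lammin * t^2 else 0) = 0 := by
            by_cases h : i = i₀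
            · rcases hti₀ with ht | hcz
              · simp [h, ht]
              · exact absurd (h ▸ hcz) hc
            · rw [if_neg h]
          rw [h0, add_zero, hzdef]
          simp only [if_pos hc]
          have hstep : lam i * βs * cbar i / (lam i * βs - 1) - cbar i
              = cbar i / (lam i * βs - 1) := by
            field_simp
            ring
          rw [hstep, div_pow, ← mul_div_assoc]
        · have hc0 : cbar i = 0 := not_not.mp hc
          rw [hzdef]
          simp only [if_neg hc]
          by_cases h : i = i₀
          · rw [if_pos h, if_pos h, hc0, h, hi₀]; ring
          · rw [if_neg h, if_neg h, hc0]; ring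
      rw [Finset.sum_congr rfl (fun i _ => hptw i), Finset.sum_add_distrib, hψdef,
        Finset.sum_ite_eq' Finset.univ i₀, if_pos (Finset.mem_univ i₀)]
    have hcon' : (∑ i, lam i * (z i - cbar i)^2) = 1 := by rw [hsum1]; exact hcon
    have hsum2 : (∑ i, (z i)^2) =
        (∑ i, if cbar i ≠ 0 then (lam i * βs * cbar i / (lam i * βs - 1))^2 else 0) + t^2 := by
      have hptw : ∀ i, (z i)^2 =
          (if cbar i ≠ 0 then (lam i * βs * cbar i / (lam i * βs - 1))^2 else 0) +
          (if i = i₀ then t^2 else 0) := by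
        intro i
        by_cases hc : cbar i ≠ 0
        · have h0 : (if i = i₀ then t^2 else 0) = 0 := by
            by_cases h : i = i₀
            · rcases hti₀ with ht | hcz
              · simp [h, ht]
              · exact absurd (h ▸ hcz) hc
            · rw [if_neg h]
          rw [h0, add_zero, hzdef]
          simp only [if_pos hc]
        · have hc0 : cbar i = 0 := not_not.mp hc
          rw [hzdef]
          simp only [if_neg hc]
          by_cases h : i = i₀
          · rw [if_pos h, if_pos h]; ring
          · rw [if_neg h, if_neg h]; ring
      rw [Finset.sum_congr rfl (fun i _ => hptw i), Finset.sum_add_distrib,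
        Finset.sum_ite_eq' Finset.univ i₀, if_pos (Finset.mem_univ i₀)]
    have hle : γ ≤ ∑ i, (z i)^2 := by
      have hmem : ellFun lam cbar βs ∈ ellFun lam cbar '' ellDom lam cbar lammin :=
        ⟨βs, hβdom, rfl⟩
      have h1 := le_csSup hbdd hmem
      have hψs : ψ βs = 1 - lammin * t^2 := by linarith
      have h2 : -(ellFun lam cbar βs) = ∑ i, (z i)^2 := by
        rw [ellFun_eq]
        have hptw : ∀ i, (if cbar i ≠ 0 then (cbar i)^2 * (lam i * βs / (lam i * βs - 1)) else 0)
            = (if cbar i ≠ 0 then (lam i * βs * cbar i / (lam i * βs - 1))^2 else 0)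
              - βs * (if cbar i ≠ 0 then lam i * (cbar i)^2 / (lam i * βs - 1)^2 else 0) := by
          intro i
          by_cases hc : cbar i ≠ 0
          · simp only [if_pos hc]
            have hd := hden i hc
            field_simp
          · simp only [if_neg hc]; ring
        have hs3 : (∑ i, (if cbar i ≠ 0 then (cbar i)^2 * (lam i * βs / (lam i * βs - 1)) else 0))
            = (∑ i, if cbar i ≠ 0 then (lam i * βs * cbar i / (lam i * βs - 1))^2 else 0)
              - βs * ψ βs := by
          rw [Finset.sum_congr rfl (fun i _ => hptw i), Finset.sum_sub_distrib, ← Finset.mul_sum,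
            hψdef]
        rw [hs3, hψs, hsum2]
        linear_combination hβt
      rw [hγ]
      linarith
    have hge : (∑ i, (z i)^2) ≤ γ := wdγ z (le_of_eq hcon')
    exact ⟨z, hcon', le_antisymm hge hle⟩
  · -- 0 < γ
    obtain ⟨i₂, hi₂⟩ := hex
    set s : ℝ := if 0 ≤ cbar i₂ then 1 / Real.sqrt lammin else -(1 / Real.sqrt lammin) with hs
    have hsq : s^2 = 1 / lammin := by
      have h1 : (1 / Real.sqrt lammin)^2 = 1 / lammin := by
        rw [div_pow, one_pow, Real.sq_sqrt (le_of_lt hpos)]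
      rcases le_or_gt 0 (cbar i₂) with h | h
      · rw [hs, if_pos h]; exact h1
      · rw [hs, if_neg (not_le.mpr h), neg_pow]
        simp [h1, Real.sq_sqrt (le_of_lt hpos)]
    set z' : Fin n → ℝ := fun i => cbar i + (if i = i₂ then s else 0) with hz'
    have hcon : (∑ i, lam i * (z' i - cbar i)^2) = 1 := by
      have : ∀ i, lam i * (z' i - cbar i)^2 = if i = i₂ then lammin * s^2 else 0 := by
        intro i; rw [hz']; simp only [add_sub_cancel_left]
        by_cases h : i = i₂
        · rw [if_pos h, if_pos h, h, hi₂]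
        · rw [if_neg h, if_neg h]; ring
      rw [Finset.sum_congr rfl (fun i _ => this i), Finset.sum_ite_eq' Finset.univ i₂]
      simp [hsq, ne_of_gt hpos]
    have hbound := wdγ z' (le_of_eq hcon)
    have hterm : 1/lammin ≤ (z' i₂)^2 := by
      have hz'i : z' i₂ = cbar i₂ + s := by rw [hz']; simp
      rw [hz'i, ← hsq]
      rcases le_or_gt 0 (cbar i₂) with h | h
      · have hspos : 0 < s := by rw [hs, if_pos h]; positivity
        nlinarith
      · have hsneg : s < 0 := by
          rw [hs, if_neg (not_le.mpr h)]
          have : 0 < 1 / Real.sqrt lammin := by positivity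
          linarith
        nlinarith
    have h2 : (z' i₂)^2 ≤ (∑ i, (z' i)^2) :=
      Finset.single_le_sum (fun i _ => sq_nonneg (z' i)) (Finset.mem_univ i₂)
    exact lt_of_lt_of_le hβ0pos (hterm.trans (h2.trans hbound))

theorem stmt_18 {n : ℕ} (P P₀ : Matrix (Fin n) (Fin n) ℝ) (c c₀ : Fin n → ℝ)
    (hP : P.PosDef) (hP₀ : P₀.PosDef)
    (L₀ : Matrix (Fin n) (Fin n) ℝ) (hL₀ : IsUnit L₀) (hfac : P₀ = L₀ * L₀ᵀ)
    -- spectral decomposition of the transformed matrix `P̃ = L₀⁻¹ P L₀⁻ᵀ`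
    (V D : Matrix (Fin n) (Fin n) ℝ) (lam : Fin n → ℝ)
    (hV : Vᵀ * V = 1) (hD : D = Matrix.diagonal lam)
    (hdec : L₀⁻¹ * P * (L₀⁻¹)ᵀ = V * D * Vᵀ)
    (lammin : ℝ) (hmin : ∀ i, lammin ≤ lam i) (hex : ∃ i, lam i = lammin)
    -- `ℓ* = sup { ℓ_{c̃,P̃}(β) : β ∈ I_{P̃} }` with `c̃ = L₀ᵀ(c − c₀)`, and `γ = −ℓ*`
    (γ : ℝ)
    (hγ : γ = -sSup (ellFun lam (Vᵀ.mulVec (L₀ᵀ.mulVec (c - c₀))) ''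
      ellDom lam (Vᵀ.mulVec (L₀ᵀ.mulVec (c - c₀))) lammin)) :
    0 < γ ∧
    (Ellipsoid c P ⊆ Ellipsoid c₀ (γ⁻¹ • P₀) ∧
      (frontier (Ellipsoid c P) ∩ frontier (Ellipsoid c₀ (γ⁻¹ • P₀))).Nonempty) ∧
    (Ellipsoid ((Real.sqrt γ)⁻¹ • (c - c₀) + c₀) (γ • P) ⊆ Ellipsoid c₀ P₀ ∧
      (frontier (Ellipsoid ((Real.sqrt γ)⁻¹ • (c - c₀) + c₀) (γ • P)) ∩
        frontier (Ellipsoid c₀ P₀)).Nonempty) := by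
  classical
  have hdetL : IsUnit L₀.det := (Matrix.isUnit_iff_isUnit_det _).mp hL₀
  have hdetLT : IsUnit (L₀ᵀ).det := by rw [Matrix.det_transpose]; exact hdetL
  have hVV : V * Vᵀ = 1 := mul_eq_one_comm.mp hV
  set A : Matrix (Fin n) (Fin n) ℝ := L₀ * V with hAdef
  have hPdec : P = A * Matrix.diagonal lam * Aᵀ := by
    have h1 := congrArg (fun X => L₀ * X * L₀ᵀ) hdec
    have h2 : L₀ * (L₀⁻¹ * P * (L₀⁻¹)ᵀ) * L₀ᵀ = P := by
      rw [Matrix.transpose_nonsing_inv]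
      simp only [Matrix.mul_assoc]
      rw [Matrix.nonsing_inv_mul _ hdetLT, Matrix.mul_one, ← Matrix.mul_assoc,
        Matrix.mul_nonsing_inv _ hdetL, Matrix.one_mul]
    have h3 : L₀ * (V * D * Vᵀ) * L₀ᵀ = A * Matrix.diagonal lam * Aᵀ := by
      rw [hD, hAdef, Matrix.transpose_mul]
      simp only [Matrix.mul_assoc]
    rw [← h2, h1, h3]
  have hP0dec : P₀ = A * Aᵀ := by
    rw [hfac, hAdef, Matrix.transpose_mul, ← Matrix.mul_assoc, Matrix.mul_assoc L₀ V Vᵀ, hVV,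
      Matrix.mul_one]
  have hdetV : IsUnit V.det := by
    have h := congrArg Matrix.det hV
    rw [Matrix.det_mul, Matrix.det_transpose, Matrix.det_one] at h
    exact IsUnit.of_mul_eq_one _ h
  have hdetA : IsUnit A.det := by rw [hAdef, Matrix.det_mul]; exact hdetL.mul hdetV
  have hdetAT : IsUnit Aᵀ.det := by rw [Matrix.det_transpose]; exact hdetA
  have hconj : ∀ (Mm : Matrix (Fin n) (Fin n) ℝ) (w : Fin n → ℝ),
      w ⬝ᵥ (A * Mm * Aᵀ) *ᵥ w = (Aᵀ *ᵥ w) ⬝ᵥ Mm *ᵥ (Aᵀ *ᵥ w) := by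
    intro Mm w
    rw [← Matrix.mulVec_mulVec, ← Matrix.mulVec_mulVec, Matrix.dotProduct_mulVec,
      ← Matrix.mulVec_transpose]
  have hquadP : ∀ v : Fin n → ℝ, v ⬝ᵥ P *ᵥ v = ∑ i, lam i * ((Aᵀ *ᵥ v) i)^2 := by
    intro v
    rw [hPdec, hconj]
    simp only [dotProduct, Matrix.mulVec_diagonal]
    exact Finset.sum_congr rfl fun i _ => by ring
  have hquadP₀ : ∀ v : Fin n → ℝ, v ⬝ᵥ P₀ *ᵥ v = ∑ i, ((Aᵀ *ᵥ v) i)^2 := by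
    intro v
    have hone : A * Aᵀ = A * 1 * Aᵀ := by rw [Matrix.mul_one]
    rw [hP0dec, hone, hconj, Matrix.one_mulVec]
    exact Finset.sum_congr rfl fun i _ => (sq _).symm
  have hlampos : ∀ i, 0 < lam i := by
    intro i
    have hinv : Aᵀ *ᵥ ((Aᵀ)⁻¹ *ᵥ Pi.single i 1) = Pi.single i 1 := by
      rw [Matrix.mulVec_mulVec, Matrix.mul_nonsing_inv _ hdetAT, Matrix.one_mulVec]
    have hwne : (Aᵀ)⁻¹ *ᵥ Pi.single i 1 ≠ 0 := by
      intro h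
      rw [h, Matrix.mulVec_zero] at hinv
      have h2 := congrFun hinv i
      simp at h2
    have hq := hP.dotProduct_mulVec_pos hwne
    rw [star_trivial, hquadP _, hinv] at hq
    have hsum : (∑ j, lam j * ((Pi.single i 1 : Fin n → ℝ) j)^2) = lam i := by
      rw [Finset.sum_eq_single i]
      · simp
      · intro j _ hj
        simp [Pi.single_apply, hj]
      · intro h; exact absurd (Finset.mem_univ i) h
    rw [hsum] at hq
    exact hq
  have hlammin : 0 < lammin := by obtain ⟨i, hi⟩ := hex; rw [← hi]; exact hlampos i
  set cbar : Fin n → ℝ := Aᵀ *ᵥ (c - c₀) with hcbar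
  have hcbeq : Vᵀ.mulVec (L₀ᵀ.mulVec (c - c₀)) = cbar := by
    rw [hcbar, hAdef, Matrix.transpose_mul, Matrix.mulVec_mulVec]
  rw [hcbeq] at hγ
  obtain ⟨wdγ, ⟨zs, hzs1, hzs2⟩, hγpos⟩ := core lam cbar lammin hmin hex hlammin γ hγ
  have hsγ : 0 < Real.sqrt γ := Real.sqrt_pos.mpr hγpos
  have hsγsq : (Real.sqrt γ)^2 = γ := Real.sq_sqrt hγpos.le
  have hγne : γ ≠ 0 := ne_of_gt hγpos
  -- quadratic identities
  have hq1 : ∀ x : Fin n → ℝ, (x - c) ⬝ᵥ P *ᵥ (x - c)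
      = ∑ i, lam i * ((Aᵀ *ᵥ (x - c₀)) i - cbar i)^2 := by
    intro x
    rw [hquadP]
    have hxc : Aᵀ *ᵥ (x - c) = Aᵀ *ᵥ (x - c₀) - cbar := by
      rw [hcbar, ← Matrix.mulVec_sub]
      congr 1
      abel
    rw [hxc]
    exact Finset.sum_congr rfl fun i _ => by rw [Pi.sub_apply]
  have hq2 : ∀ x : Fin n → ℝ, (x - c₀) ⬝ᵥ (γ⁻¹ • P₀) *ᵥ (x - c₀)
      = γ⁻¹ * ∑ i, ((Aᵀ *ᵥ (x - c₀)) i)^2 := by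
    intro x
    rw [Matrix.smul_mulVec, dotProduct_smul, smul_eq_mul, hquadP₀]
  set d : Fin n → ℝ := (Real.sqrt γ)⁻¹ • (c - c₀) + c₀ with hddef
  have hxd : ∀ x : Fin n → ℝ, Aᵀ *ᵥ (x - d)
      = Aᵀ *ᵥ (x - c₀) - (Real.sqrt γ)⁻¹ • cbar := by
    intro x
    have hvec : x - d = (x - c₀) - (Real.sqrt γ)⁻¹ • (c - c₀) := by
      rw [hddef]; abel
    rw [hvec, Matrix.mulVec_sub, Matrix.mulVec_smul, hcbar]
  have hq3 : ∀ x : Fin n → ℝ, (x - d) ⬝ᵥ (γ • P) *ᵥ (x - d)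
      = γ * ∑ i, lam i * ((Aᵀ *ᵥ (x - c₀)) i - (Real.sqrt γ)⁻¹ * cbar i)^2 := by
    intro x
    rw [Matrix.smul_mulVec, dotProduct_smul, smul_eq_mul, hquadP, hxd]
    have hsun : (∑ i, lam i * ((Aᵀ *ᵥ (x - c₀) - (Real.sqrt γ)⁻¹ • cbar) i)^2)
        = ∑ i, lam i * ((Aᵀ *ᵥ (x - c₀)) i - (Real.sqrt γ)⁻¹ * cbar i)^2 :=
      Finset.sum_congr rfl fun i _ => by rw [Pi.sub_apply, Pi.smul_apply, smul_eq_mul]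
    rw [hsun]
  have hq4 : ∀ x : Fin n → ℝ, (x - c₀) ⬝ᵥ P₀ *ᵥ (x - c₀)
      = ∑ i, ((Aᵀ *ᵥ (x - c₀)) i)^2 := fun x => hquadP₀ _
  -- scaling identity relating the two quadratic pictures
  have hscale : ∀ x : Fin n → ℝ,
      (∑ i, lam i * (Real.sqrt γ * (Aᵀ *ᵥ (x - c₀)) i - cbar i)^2)
      = γ * ∑ i, lam i * ((Aᵀ *ᵥ (x - c₀)) i - (Real.sqrt γ)⁻¹ * cbar i)^2 := by
    intro x
    rw [Finset.mul_sum]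
    refine Finset.sum_congr rfl fun i _ => ?_
    have h1 : Real.sqrt γ * (Aᵀ *ᵥ (x - c₀)) i - cbar i
        = Real.sqrt γ * ((Aᵀ *ᵥ (x - c₀)) i - (Real.sqrt γ)⁻¹ * cbar i) := by
      rw [mul_sub, ← mul_assoc, mul_inv_cancel₀ (ne_of_gt hsγ), one_mul]
    rw [h1, mul_pow, hsγsq]
    ring
  refine ⟨hγpos, ⟨?_, ?_⟩, ?_, ?_⟩
  · -- inclusion 1
    intro x hx
    have hx1 : (x - c) ⬝ᵥ P *ᵥ (x - c) ≤ 1 := hx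
    rw [hq1] at hx1
    have h2 := wdγ _ hx1
    show (x - c₀) ⬝ᵥ (γ⁻¹ • P₀) *ᵥ (x - c₀) ≤ 1
    rw [hq2]
    calc γ⁻¹ * ∑ i, ((Aᵀ *ᵥ (x - c₀)) i)^2 ≤ γ⁻¹ * γ :=
          mul_le_mul_of_nonneg_left h2 (inv_nonneg.mpr hγpos.le)
      _ = 1 := inv_mul_cancel₀ hγne
  · -- frontier intersection 1
    refine ⟨c₀ + (Aᵀ)⁻¹ *ᵥ zs, ?_, ?_⟩
    · rw [frontier_ellipsoid]
      show (c₀ + (Aᵀ)⁻¹ *ᵥ zs - c) ⬝ᵥ P *ᵥ (c₀ + (Aᵀ)⁻¹ *ᵥ zs - c) = 1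
      have hz : Aᵀ *ᵥ (c₀ + (Aᵀ)⁻¹ *ᵥ zs - c₀) = zs := by
        rw [add_sub_cancel_left, Matrix.mulVec_mulVec, Matrix.mul_nonsing_inv _ hdetAT,
          Matrix.one_mulVec]
      rw [hq1, hz]
      exact hzs1
    · rw [frontier_ellipsoid]
      show (c₀ + (Aᵀ)⁻¹ *ᵥ zs - c₀) ⬝ᵥ (γ⁻¹ • P₀) *ᵥ (c₀ + (Aᵀ)⁻¹ *ᵥ zs - c₀) = 1
      have hz : Aᵀ *ᵥ (c₀ + (Aᵀ)⁻¹ *ᵥ zs - c₀) = zs := by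
        rw [add_sub_cancel_left, Matrix.mulVec_mulVec, Matrix.mul_nonsing_inv _ hdetAT,
          Matrix.one_mulVec]
      rw [hq2, hz, hzs2]
      exact inv_mul_cancel₀ hγne
  · -- inclusion 2
    intro x hx
    have hx1 : (x - d) ⬝ᵥ (γ • P) *ᵥ (x - d) ≤ 1 := hx
    rw [hq3] at hx1
    rw [← hscale] at hx1
    have h2 := wdγ _ hx1
    have h3 : (∑ i, (Real.sqrt γ * (Aᵀ *ᵥ (x - c₀)) i)^2)
        = γ * ∑ i, ((Aᵀ *ᵥ (x - c₀)) i)^2 := by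
      rw [Finset.mul_sum]
      exact Finset.sum_congr rfl fun i _ => by rw [mul_pow, hsγsq]
    rw [h3] at h2
    show (x - c₀) ⬝ᵥ P₀ *ᵥ (x - c₀) ≤ 1
    rw [hq4]
    have h4 : γ * (∑ i, ((Aᵀ *ᵥ (x - c₀)) i)^2) ≤ γ * 1 := by rw [mul_one]; exact h2
    exact (mul_le_mul_iff_right₀ hγpos).mp h4
  · -- frontier intersection 2
    refine ⟨c₀ + (Aᵀ)⁻¹ *ᵥ ((Real.sqrt γ)⁻¹ • zs), ?_, ?_⟩
    · rw [frontier_ellipsoid]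
      show (c₀ + (Aᵀ)⁻¹ *ᵥ ((Real.sqrt γ)⁻¹ • zs) - d) ⬝ᵥ (γ • P) *ᵥ
        (c₀ + (Aᵀ)⁻¹ *ᵥ ((Real.sqrt γ)⁻¹ • zs) - d) = 1
      have hz : Aᵀ *ᵥ (c₀ + (Aᵀ)⁻¹ *ᵥ ((Real.sqrt γ)⁻¹ • zs) - c₀)
          = (Real.sqrt γ)⁻¹ • zs := by
        rw [add_sub_cancel_left, Matrix.mulVec_mulVec, Matrix.mul_nonsing_inv _ hdetAT,
          Matrix.one_mulVec]
      rw [hq3, hz]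
      have hterm : (∑ i, lam i * ((((Real.sqrt γ)⁻¹ • zs) i) - (Real.sqrt γ)⁻¹ * cbar i)^2)
          = ((Real.sqrt γ)⁻¹)^2 * ∑ i, lam i * (zs i - cbar i)^2 := by
        rw [Finset.mul_sum]
        exact Finset.sum_congr rfl fun i _ => by
          rw [Pi.smul_apply, smul_eq_mul]; ring
      rw [hterm, hzs1, inv_pow, hsγsq, mul_one, mul_inv_cancel₀ hγne]
    · rw [frontier_ellipsoid]
      show (c₀ + (Aᵀ)⁻¹ *ᵥ ((Real.sqrt γ)⁻¹ • zs) - c₀) ⬝ᵥ P₀ *ᵥ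
        (c₀ + (Aᵀ)⁻¹ *ᵥ ((Real.sqrt γ)⁻¹ • zs) - c₀) = 1
      have hz : Aᵀ *ᵥ (c₀ + (Aᵀ)⁻¹ *ᵥ ((Real.sqrt γ)⁻¹ • zs) - c₀)
          = (Real.sqrt γ)⁻¹ • zs := by
        rw [add_sub_cancel_left, Matrix.mulVec_mulVec, Matrix.mul_nonsing_inv _ hdetAT,
          Matrix.one_mulVec]
      rw [hq4, hz]
      have : (∑ i, (((Real.sqrt γ)⁻¹ • zs) i)^2) = (Real.sqrt γ)⁻¹^2 * ∑ i, (zs i)^2 := by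
        rw [Finset.mul_sum]
        exact Finset.sum_congr rfl fun i _ => by
          rw [Pi.smul_apply, smul_eq_mul, mul_pow]
      rw [this, hzs2, inv_pow, hsγsq]
      exact inv_mul_cancel₀ hγne
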